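/- For any real symmetric n×n matrix A and any real symmetric matrix B, the Frobenius norm of B is less than or equal to the Frobenius norm of e^{−A/2}·(D e^A(B))·e^{−A/2}, where D e^A(B) is the derivative of the matrix exponential at A in direction B. -/

import Mathlib

open Matrix NormedSpace

section aux
attribute [local instance] Matrix.linftyOpNormedRing Matrix.linftyOpNormedAlgebra

variable {n : ℕ}

lemma myContExp : Continuous (exp : Matrix (Fin n) (Fin n) ℝ → Matrix (Fin n) (Fin n) ℝ) :=
  exp_continuous

lemma myContF (A B : Matrix (Fin n) (Fin n) ℝ) :
    Continuous (Function.uncurry fun t s : ℝ =>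
      exp (s • (A + t • B)) * B * exp ((1 - s) • A)) := by
  apply Continuous.mul
  · apply Continuous.mul
    · exact myContExp.comp (continuous_snd.smul (continuous_const.add
        (continuous_fst.smul continuous_const)))
    · exact continuous_const
  · exact myContExp.comp ((continuous_const.sub continuous_snd).smul continuous_const)

lemma myContG (A B : Matrix (Fin n) (Fin n) ℝ) :
    Continuous fun s : ℝ => exp (s • A) * B * exp ((1 - s) • A) := by
  apply Continuous.mul
  · exact (myContExp.comp (continuous_id.smul continuous_const)).mul continuous_const
  · exact myContExp.comp ((continuous_const.sub continuous_id).smul continuous_const)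

lemma myContEntry (A B : Matrix (Fin n) (Fin n) ℝ) (k l : Fin n) :
    Continuous fun s : ℝ => (exp (s • A) * B * exp ((1 - s) • A)) k l :=
  (continuous_apply l).comp ((continuous_apply k).comp (myContG A B))

noncomputable def Hfun (A B : Matrix (Fin n) (Fin n) ℝ) (t : ℝ) : Matrix (Fin n) (Fin n) ℝ :=
  ∫ s in (0:ℝ)..1, exp (s • (A + t • B)) * B * exp ((1 - s) • A)

lemma duhamel (A B : Matrix (Fin n) (Fin n) ℝ) (t : ℝ) :
    exp (A + t • B) = exp A + t • Hfun A B t := by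
  set X := A + t • B with hX
  have hg : ∀ s : ℝ, HasDerivAt (fun s : ℝ => exp (s • X) * exp ((1 - s) • A))
      (exp (s • X) * (t • B) * exp ((1 - s) • A)) s := by
    intro s
    have h1 : HasDerivAt (fun s : ℝ => exp (s • X)) (exp (s • X) * X) s :=
      hasDerivAt_exp_smul_const X s
    have h2 : HasDerivAt (fun s : ℝ => exp ((1 - s) • A))
        ((-1 : ℝ) • (A * exp ((1 - s) • A))) s := by
      have h3 : HasDerivAt (fun u : ℝ => exp (u • A)) (A * exp ((1 - s) • A)) (1 - s) :=
        hasDerivAt_exp_smul_const' A (1 - s)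
      have h4 : HasDerivAt (fun s : ℝ => 1 - s) (-1 : ℝ) s := by
        simpa using (hasDerivAt_id s).const_sub 1
      exact HasDerivAt.scomp s h3 h4
    have h5 := h1.mul h2
    refine h5.congr_deriv ?_
    rw [hX]
    simp only [neg_one_smul, mul_neg, add_mul, mul_add, mul_assoc]
    abel
  have hcont : Continuous fun s : ℝ => exp (s • X) * (t • B) * exp ((1 - s) • A) := by
    apply Continuous.mul
    · exact (myContExp.comp (continuous_id.smul continuous_const)).mul continuous_const
    · exact myContExp.comp ((continuous_const.sub continuous_id).smul continuous_const)
  have key := intervalIntegral.integral_eq_sub_of_hasDerivAt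
    (f := fun s : ℝ => exp (s • X) * exp ((1 - s) • A))
    (fun s _ => hg s) (hcont.intervalIntegrable 0 1)
  have hval : (fun s : ℝ => exp (s • X) * exp ((1 - s) • A)) 1 -
      (fun s : ℝ => exp (s • X) * exp ((1 - s) • A)) 0 = exp X - exp A := by
    norm_num [exp_zero]
  rw [hval] at key
  have hsmul : ∀ s : ℝ, exp (s • X) * (t • B) * exp ((1 - s) • A)
      = t • (exp (s • X) * B * exp ((1 - s) • A)) := by
    intro s
    simp [mul_smul_comm, smul_mul_assoc]
  simp only [hsmul] at key
  rw [intervalIntegral.integral_smul] at key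
  have : t • Hfun A B t = exp X - exp A := by rw [Hfun, ← hX]; exact key
  rw [this]; abel

lemma hasDerivAt_exp_dir (A B : Matrix (Fin n) (Fin n) ℝ) :
    HasDerivAt (fun t : ℝ => exp (A + t • B))
      (∫ s in (0:ℝ)..1, exp (s • A) * B * exp ((1 - s) • A)) 0 := by
  have contH : Continuous (Hfun A B) :=
    intervalIntegral.continuous_parametric_intervalIntegral_of_continuous'
      (f := fun t s : ℝ => exp (s • (A + t • B)) * B * exp ((1 - s) • A))
      (myContF A B) 0 1
  have hH0 : Hfun A B 0 = ∫ s in (0:ℝ)..1, exp (s • A) * B * exp ((1 - s) • A) := by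
    rw [Hfun]; norm_num
  rw [← hH0]
  apply hasDerivAt_iff_tendsto_slope.mpr
  apply Filter.Tendsto.congr' _ ((contH.tendsto 0).mono_left nhdsWithin_le_nhds)
  filter_upwards [self_mem_nhdsWithin] with t ht
  have hft : exp (A + t • B) - exp (A + (0:ℝ) • B) = t • Hfun A B t := by
    rw [duhamel A B t]
    norm_num
  have : slope (fun t : ℝ => exp (A + t • B)) 0 t
      = (t - 0)⁻¹ • (exp (A + t • B) - exp (A + (0:ℝ) • B)) := slope_def_module _ _ _
  rw [this, hft, smul_smul, sub_zero, inv_mul_cancel₀ (by simpa using ht), one_smul]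

end aux

section entry
attribute [local instance] Matrix.linftyOpNormedRing Matrix.linftyOpNormedAlgebra

noncomputable def entryCLM {n : ℕ} (i j : Fin n) : Matrix (Fin n) (Fin n) ℝ →L[ℝ] ℝ :=
  LinearMap.toContinuousLinearMap
    (Matrix.entryLinearMap ℝ ℝ i j)

@[simp] lemma entryCLM_apply {n : ℕ} (i j : Fin n) (M : Matrix (Fin n) (Fin n) ℝ) :
    entryCLM i j M = M i j := rfl

lemma expDeriv_entry {n : ℕ} (A B : Matrix (Fin n) (Fin n) ℝ) (i j : Fin n) :
    HasDerivAt (fun t : ℝ => exp (A + t • B) i j)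
      (∫ s in (0:ℝ)..1, (exp (s • A) * B * exp ((1 - s) • A)) i j) 0 := by
  have h := (entryCLM i j).hasFDerivAt.comp_hasDerivAt 0 (hasDerivAt_exp_dir A B)
  have hint : (entryCLM i j) (∫ s in (0:ℝ)..1, exp (s • A) * B * exp ((1 - s) • A))
      = ∫ s in (0:ℝ)..1, (exp (s • A) * B * exp ((1 - s) • A)) i j := by
    exact ((entryCLM i j).intervalIntegral_comp_comm ((myContG A B).intervalIntegrable 0 1)).symm
  exact h.congr_deriv hint
end entry

lemma scalar_int_one_le (δ : ℝ) :
    1 ≤ ∫ s in (0:ℝ)..1, Real.exp ((s - 1/2) * δ) := by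
  rcases eq_or_ne δ 0 with h | h
  · simp [h]
  · have hderiv : ∀ s : ℝ, HasDerivAt (fun s : ℝ => Real.exp ((s - 1/2) * δ) / δ)
        (Real.exp ((s - 1/2) * δ)) s := by
      intro s
      have h1 : HasDerivAt (fun s : ℝ => (s - 1/2) * δ) δ s := by
        exact (((hasDerivAt_id s).sub_const (1/2)).mul_const δ).congr_deriv (one_mul δ)
      have h2 := (Real.hasDerivAt_exp _).comp s h1
      have h3 := h2.div_const δ
      simpa [Function.comp, mul_div_assoc, mul_div_cancel_right₀ _ h] using h3
    have hcont : Continuous fun s : ℝ => Real.exp ((s - 1/2) * δ) := by continuity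
    have hval := intervalIntegral.integral_eq_sub_of_hasDerivAt
      (fun s _ => hderiv s) (hcont.intervalIntegrable 0 1)
    rw [hval]
    have e0 : ((1:ℝ) - 1/2) * δ = δ/2 := by ring
    have e1 : ((0:ℝ) - 1/2) * δ = -(δ/2) := by ring
    rw [e0, e1, div_sub_div_same]
    set E := Real.exp (δ/2) - Real.exp (-(δ/2)) with hE
    rcases lt_or_gt_of_ne h with hneg | hpos
    · have hs : Real.sinh (δ/2) ≤ δ/2 := (Real.sinh_lt_self_iff.mpr (by linarith)).le
      rw [Real.sinh_eq] at hs
      have hEδ : E ≤ δ := by rw [hE]; linarith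
      have : E / δ = (-E) / (-δ) := by rw [neg_div_neg_eq]
      rw [this]
      rw [one_le_div (by linarith : (0:ℝ) < -δ)]
      linarith
    · have hs : δ/2 ≤ Real.sinh (δ/2) := Real.self_le_sinh_iff.mpr (by linarith)
      rw [Real.sinh_eq] at hs
      rw [one_le_div hpos, hE]
      linarith

section conj
variable {n : ℕ}

lemma sandwich_left {U : Matrix (Fin n) (Fin n) ℝ} (hU2 : star U * U = 1)
    (Z : Matrix (Fin n) (Fin n) ℝ) : star U * (U * Z) = Z := by
  rw [← mul_assoc, hU2, one_mul]

lemma conjExp (A : Matrix (Fin n) (Fin n) ℝ) (hA : A.IsHermitian) (r : ℝ) :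
    star (hA.eigenvectorUnitary : Matrix (Fin n) (Fin n) ℝ) * exp (r • A) *
      (hA.eigenvectorUnitary : Matrix (Fin n) (Fin n) ℝ)
    = diagonal (fun i => Real.exp (r * hA.eigenvalues i)) := by
  set U : Matrix (Fin n) (Fin n) ℝ := (hA.eigenvectorUnitary : Matrix (Fin n) (Fin n) ℝ) with hU
  have hU1 : U * star U = 1 := (Matrix.mem_unitaryGroup_iff).mp hA.eigenvectorUnitary.2
  have hU2 : star U * U = 1 := (Matrix.mem_unitaryGroup_iff').mp hA.eigenvectorUnitary.2
  have hinv : U⁻¹ = star U := Matrix.inv_eq_left_inv hU2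
  have hUnit : IsUnit U := ⟨⟨U, star U, hU1, hU2⟩, rfl⟩
  have hAeq : A = U * diagonal hA.eigenvalues * star U := by
    have := hA.spectral_theorem
    rwa [RCLike.ofReal_real_eq_id, Function.id_comp] at this
  have hd : diagonal (fun i => r * hA.eigenvalues i) = r • diagonal hA.eigenvalues := by
    rw [← diagonal_smul]; congr 1
  have hrA : r • A = U * diagonal (fun i => r * hA.eigenvalues i) * U⁻¹ := by
    rw [hd, hinv]
    conv_lhs => rw [hAeq]
    simp [Matrix.smul_mul, Matrix.mul_smul]
  rw [hrA, Matrix.exp_conj U _ hUnit, Matrix.exp_diagonal, hinv]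
  have hexpfun : (exp fun i => r * hA.eigenvalues i) = fun i => Real.exp (r * hA.eigenvalues i) := by
    rw [Pi.exp_def]
    funext i
    rw [Real.exp_eq_exp_ℝ]
  rw [hexpfun]
  simp only [mul_assoc, hU2, mul_one]
  rw [sandwich_left hU2]
end conj

section conj2
variable {n : ℕ}

lemma sandwich_right {U : Matrix (Fin n) (Fin n) ℝ} (hU1 : U * star U = 1)
    (Z : Matrix (Fin n) (Fin n) ℝ) : U * (star U * Z) = Z := by
  rw [← mul_assoc, hU1, one_mul]

lemma exp_comb (A : Matrix (Fin n) (Fin n) ℝ) (a b : ℝ) :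
    exp (a • A) * exp (b • A) = exp ((a + b) • A) := by
  rw [← Matrix.exp_add_of_commute _ _ (((Commute.refl A).smul_left a).smul_right b), add_smul]

lemma conj_entry (A B : Matrix (Fin n) (Fin n) ℝ) (hA : A.IsHermitian) (u : ℝ) (i j : Fin n) :
    (star (hA.eigenvectorUnitary : Matrix (Fin n) (Fin n) ℝ) *
      (exp (u • A) * B * exp ((-u) • A)) *
      (hA.eigenvectorUnitary : Matrix (Fin n) (Fin n) ℝ)) i j
    = Real.exp (u * (hA.eigenvalues i - hA.eigenvalues j)) *
        ((star (hA.eigenvectorUnitary : Matrix (Fin n) (Fin n) ℝ) * B *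
          (hA.eigenvectorUnitary : Matrix (Fin n) (Fin n) ℝ)) i j) := by
  set U : Matrix (Fin n) (Fin n) ℝ := (hA.eigenvectorUnitary : Matrix (Fin n) (Fin n) ℝ) with hU
  have hU1 : U * star U = 1 := (Matrix.mem_unitaryGroup_iff).mp hA.eigenvectorUnitary.2
  have hU2 : star U * U = 1 := (Matrix.mem_unitaryGroup_iff').mp hA.eigenvectorUnitary.2
  have key : star U * (exp (u • A) * B * exp ((-u) • A)) * U
      = (star U * exp (u • A) * U) * (star U * B * U) * (star U * exp ((-u) • A) * U) := by
    simp only [mul_assoc, sandwich_right hU1]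
  rw [key, conjExp A hA u, conjExp A hA (-u)]
  rw [Matrix.mul_diagonal, Matrix.diagonal_mul]
  rw [mul_comm (Real.exp (u * hA.eigenvalues i)) ((star U * B * U) i j), mul_assoc,
    ← Real.exp_add]
  rw [mul_comm]
  congr 2
  ring

end conj2

attribute [local instance] Matrix.normedAddCommGroup Matrix.normedSpace

/-- The Frobenius norm of a real square matrix, `‖M‖_F = (tr Mᵀ M)^{1/2}`. -/
noncomputable def frob {n : ℕ} (M : Matrix (Fin n) (Fin n) ℝ) : ℝ :=
  Real.sqrt ((Mᵀ * M).trace)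

lemma frob_trace_eq {n : ℕ} (X : Matrix (Fin n) (Fin n) ℝ) :
    (Xᵀ * X).trace = ∑ j, ∑ i, X i j * X i j := by
  simp [Matrix.trace, Matrix.diag, Matrix.mul_apply]

lemma frob_conj {n : ℕ} {U : Matrix (Fin n) (Fin n) ℝ} (hU1 : U * star U = 1)
    (hU2 : star U * U = 1) (M : Matrix (Fin n) (Fin n) ℝ) :
    frob (star U * M * U) = frob M := by
  have hsU : star U = Uᵀ :=
    (Matrix.star_eq_conjTranspose U).trans (Matrix.conjTranspose_eq_transpose_of_trivial U)
  have hUUt : U * Uᵀ = 1 := by rw [← hsU]; exact hU1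
  have hUtU : Uᵀ * U = 1 := by rw [← hsU]; exact hU2
  rw [frob, frob]
  congr 1
  rw [hsU]
  rw [Matrix.transpose_mul, Matrix.transpose_mul, Matrix.transpose_transpose]
  calc (Uᵀ * (Mᵀ * U) * (Uᵀ * M * U)).trace
      = (Uᵀ * (Mᵀ * (M * U))).trace := by
        have sw : ∀ Z : Matrix (Fin n) (Fin n) ℝ, U * (Uᵀ * Z) = Z := fun Z => by
          rw [← mul_assoc, hUUt, one_mul]
        simp only [mul_assoc, sw]
    _ = ((Mᵀ * (M * U)) * Uᵀ).trace := by rw [Matrix.trace_mul_comm]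
    _ = (Mᵀ * M).trace := by
        simp only [mul_assoc]
        rw [show M * (U * Uᵀ) = M by rw [hUUt, mul_one]]

/-- Infinitesimal exponential metric increasing property: for real symmetric matrices `A`, `B`,
if `D = D e^A(B)` is the derivative of the matrix exponential at `A` in direction `B`, then
`‖B‖_F ≤ ‖e^{−A/2} · D · e^{−A/2}‖_F`. -/
theorem stmt2 {n : ℕ} (A B D : Matrix (Fin n) (Fin n) ℝ)
    (hA : A.IsHermitian) (hB : B.IsHermitian)
    (hD : HasDerivAt (fun t : ℝ => exp (A + t • B)) D 0) :
    frob B ≤ frob (exp (-((1:ℝ)/2) • A) * D * exp (-((1:ℝ)/2) • A)) := by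
  classical
  set U : Matrix (Fin n) (Fin n) ℝ := (hA.eigenvectorUnitary : Matrix (Fin n) (Fin n) ℝ)
    with hUdef
  have hU1 : U * star U = 1 := (Matrix.mem_unitaryGroup_iff).mp hA.eigenvectorUnitary.2
  have hU2 : star U * U = 1 := (Matrix.mem_unitaryGroup_iff').mp hA.eigenvectorUnitary.2
  set d : Fin n → ℝ := hA.eigenvalues with hddef
  set C : Matrix (Fin n) (Fin n) ℝ := star U * B * U with hCdef
  set r : ℝ := -((1:ℝ)/2) with hrdef
  set M : Matrix (Fin n) (Fin n) ℝ := exp (r • A) * D * exp (r • A) with hMdef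
  have hDent : ∀ k l, D k l = ∫ s in (0:ℝ)..1, (exp (s • A) * B * exp ((1 - s) • A)) k l :=
    fun k l => (hasDerivAt_pi.mp (hasDerivAt_pi.mp hD k) l).unique (expDeriv_entry A B k l)
  have hNent : ∀ i j, (star U * M * U) i j
      = (∫ s in (0:ℝ)..1, Real.exp ((s - 1/2) * (d i - d j))) * C i j := by
    intro i j
    set P : Matrix (Fin n) (Fin n) ℝ := star U * exp (r • A) with hP
    set Q : Matrix (Fin n) (Fin n) ℝ := exp (r • A) * U with hQ
    have h0 : star U * M * U = P * D * Q := by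
      rw [hMdef, hP, hQ]; simp only [mul_assoc]
    rw [h0]
    have hexpand : ∀ (X : Matrix (Fin n) (Fin n) ℝ),
        (P * X * Q) i j = ∑ l, ∑ k, P i k * X k l * Q l j := by
      intro X
      rw [Matrix.mul_apply]
      congr 1; funext l
      rw [Matrix.mul_apply, Finset.sum_mul]
    rw [hexpand]
    have h2 : ∀ l k : Fin n, P i k * D k l * Q l j
        = ∫ s in (0:ℝ)..1, P i k * (exp (s • A) * B * exp ((1 - s) • A)) k l * Q l j := by
      intro l k
      rw [hDent k l, ← intervalIntegral.integral_const_mul,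
        ← intervalIntegral.integral_mul_const]
    simp only [h2]
    have hcont : ∀ l k : Fin n, Continuous
        (fun s : ℝ => P i k * (exp (s • A) * B * exp ((1 - s) • A)) k l * Q l j) :=
      fun l k => (continuous_const.mul (myContEntry A B k l)).mul continuous_const
    have h3 : ∀ l : Fin n,
        ∑ k, (∫ s in (0:ℝ)..1, P i k * (exp (s • A) * B * exp ((1 - s) • A)) k l * Q l j)
        = ∫ s in (0:ℝ)..1,
            ∑ k, P i k * (exp (s • A) * B * exp ((1 - s) • A)) k l * Q l j := by
      intro l
      rw [intervalIntegral.integral_finset_sum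
        (fun k _ => ((hcont l k).intervalIntegrable 0 1))]
    simp only [h3]
    rw [← intervalIntegral.integral_finset_sum (fun l _ =>
      ((continuous_finset_sum _ (fun k _ => hcont l k)).intervalIntegrable 0 1))]
    have h4 : ∀ s : ℝ,
        ∑ l, ∑ k, P i k * (exp (s • A) * B * exp ((1 - s) • A)) k l * Q l j
        = Real.exp ((s - 1/2) * (d i - d j)) * C i j := by
      intro s
      rw [← hexpand]
      have hmid : P * (exp (s • A) * B * exp ((1 - s) • A)) * Q
          = star U * (exp ((s - 1/2) • A) * B * exp ((-(s - 1/2)) • A)) * U := by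
        rw [hP, hQ]
        have e1 : exp (r • A) * exp (s • A) = exp ((s - 1/2) • A) := by
          rw [exp_comb]; congr 1; rw [hrdef]; ring
        have e2 : exp ((1 - s) • A) * exp (r • A) = exp ((-(s - 1/2)) • A) := by
          rw [exp_comb]; congr 1; rw [hrdef]; ring
        calc star U * exp (r • A) * (exp (s • A) * B * exp ((1 - s) • A))
              * (exp (r • A) * U)
            = star U * ((exp (r • A) * exp (s • A)) * B
                * (exp ((1 - s) • A) * exp (r • A))) * U := by
              simp only [mul_assoc]
          _ = star U * (exp ((s - 1/2) • A) * B * exp ((-(s - 1/2)) • A)) * U := by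
              rw [e1, e2]
      rw [hmid]
      exact conj_entry A B hA (s - 1/2) i j
    simp only [h4]
    rw [intervalIntegral.integral_mul_const]
  have hgoal : frob C ≤ frob (star U * M * U) := by
    rw [frob, frob, frob_trace_eq, frob_trace_eq]
    apply Real.sqrt_le_sqrt
    apply Finset.sum_le_sum
    intro j _
    apply Finset.sum_le_sum
    intro i _
    rw [hNent i j]
    have hc := scalar_int_one_le (d i - d j)
    set c : ℝ := ∫ s in (0:ℝ)..1, Real.exp ((s - 1/2) * (d i - d j))
    set x : ℝ := C i j
    nlinarith [mul_nonneg (mul_nonneg (sub_nonneg.mpr hc) (by linarith : (0:ℝ) ≤ c + 1))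
      (mul_self_nonneg x)]
  calc frob B = frob C := (frob_conj hU1 hU2 B).symm
    _ ≤ frob (star U * M * U) := hgoal
    _ = frob M := frob_conj hU1 hU2 M
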